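/- Let R be a commutative ring and A an R-module admitting two finite presentations, i.e. exact sequences R^m → R^n → A → 0 with n×m presentation matrix M, and R^{m'} → R^{n'} → A → 0 with n'×m' presentation matrix M'. Then for every i ≥ 0, the ideal of R generated by the (n−i)×(n−i) minors of M coincides with the ideal generated by the (n'−i)×(n'−i) minors of M' (with the conventions that this ideal is all of R when the minor size is ≤ 0, and is the zero ideal when the minor size exceeds the number of columns). In other words, the i-th elementary (Fitting) ideal E_i(A) is independent of the choice of finite presentation of A. -/

import Mathlib

open Matrix LinearMap

section helpers
variable {R : Type*} [CommRing R]

/-- minors ideal for matrices indexed by arbitrary types -/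
def mIdeal {ι κ : Type*} (M : Matrix ι κ R) (k : ℕ) : Ideal R :=
  Ideal.span { x | ∃ (r : Fin k → ι) (c : Fin k → κ), x = (M.submatrix r c).det }

theorem det_mem_mIdeal {ι κ : Type*} (M : Matrix ι κ R) {k : ℕ}
    (r : Fin k → ι) (c : Fin k → κ) : (M.submatrix r c).det ∈ mIdeal M k :=
  Ideal.subset_span ⟨r, c, rfl⟩

theorem mIdeal_zero {ι κ : Type*} (M : Matrix ι κ R) : mIdeal M 0 = ⊤ := by
  rw [Ideal.eq_top_iff_one]
  have := det_mem_mIdeal M (Fin.elim0 : Fin 0 → ι) Fin.elim0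
  simpa [Matrix.det_fin_zero] using this

theorem mIdeal_submatrix_le {ι κ ι' κ' : Type*} (M : Matrix ι κ R)
    (f : ι' → ι) (g : κ' → κ) (k : ℕ) : mIdeal (M.submatrix f g) k ≤ mIdeal M k := by
  rw [mIdeal, Ideal.span_le]
  rintro x ⟨r, c, rfl⟩
  rw [Matrix.submatrix_submatrix]
  exact det_mem_mIdeal M _ _

theorem mIdeal_reindex {ι κ ι' κ' : Type*} (M : Matrix ι κ R)
    (e : ι' ≃ ι) (f : κ' ≃ κ) (k : ℕ) :
    mIdeal (M.submatrix e f) k = mIdeal M k := by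
  refine le_antisymm (mIdeal_submatrix_le M e f k) ?_
  have := mIdeal_submatrix_le (M.submatrix e f) e.symm f.symm k
  simpa using this

theorem mIdeal_succ_le {ι κ : Type*} (M : Matrix ι κ R) (k : ℕ) :
    mIdeal M (k + 1) ≤ mIdeal M k := by
  rw [mIdeal, Ideal.span_le]
  rintro x ⟨r, c, rfl⟩
  rw [Matrix.det_succ_row _ 0]
  refine Ideal.sum_mem _ fun j _ => Ideal.mul_mem_left _ _ ?_
  rw [Matrix.submatrix_submatrix]
  exact det_mem_mIdeal M _ _

theorem mIdeal_le_of_le {ι κ : Type*} (M : Matrix ι κ R) {k l : ℕ} (h : k ≤ l) :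
    mIdeal M l ≤ mIdeal M k := by
  induction l with
  | zero => simp_all
  | succ l ih =>
    rcases Nat.eq_or_lt_of_le h with rfl | h'
    · exact le_rfl
    · exact (mIdeal_succ_le M l).trans (ih (Nat.lt_succ_iff.mp h'))

theorem mIdeal_transpose_le {ι κ : Type*} (M : Matrix ι κ R) (k : ℕ) :
    mIdeal Mᵀ k ≤ mIdeal M k := by
  rw [mIdeal, Ideal.span_le]
  rintro x ⟨r, c, rfl⟩
  have : (Mᵀ.submatrix r c) = (M.submatrix c r)ᵀ := by ext i j; rfl
  rw [this, Matrix.det_transpose]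
  exact det_mem_mIdeal M _ _

theorem mIdeal_transpose {ι κ : Type*} (M : Matrix ι κ R) (k : ℕ) :
    mIdeal Mᵀ k = mIdeal M k := by
  have h2 := mIdeal_transpose_le Mᵀ k
  rw [Matrix.transpose_transpose] at h2
  exact le_antisymm (mIdeal_transpose_le M k) h2

theorem mIdeal_mul_le_right {ι κ₁ κ₂ : Type*} [Fintype κ₁] (M : Matrix ι κ₁ R)
    (N : Matrix κ₁ κ₂ R) (k : ℕ) : mIdeal (M * N) k ≤ mIdeal N k := by
  rw [mIdeal, Ideal.span_le]
  rintro x ⟨r, c, rfl⟩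
  classical
  have hrow : ((M * N).submatrix r c) = fun i => ∑ x : κ₁, M (r i) x • fun j => N x (c j) := by
    ext i j
    simp [Matrix.mul_apply, Finset.sum_apply]
  have key : ((M * N).submatrix r c).det
      = ∑ p : Fin k → κ₁, (∏ i, M (r i) (p i)) * (N.submatrix p c).det := by
    have h1 : ((M * N).submatrix r c).det
        = (Matrix.detRowAlternating (R := R) (n := Fin k)).toMultilinearMap
            (fun i => ∑ x : κ₁, M (r i) x • fun j => N x (c j)) := by
      rw [← hrow]; rfl
    rw [h1, MultilinearMap.map_sum]
    refine Finset.sum_congr rfl fun p _ => ?_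
    rw [MultilinearMap.map_smul_univ]
    rfl
  rw [key]
  refine Ideal.sum_mem _ fun p _ => Ideal.mul_mem_left _ _ (det_mem_mIdeal N p c)

theorem mIdeal_mul_le_left {ι κ₁ κ₂ : Type*} [Fintype κ₁] (M : Matrix ι κ₁ R)
    (N : Matrix κ₁ κ₂ R) (k : ℕ) : mIdeal (M * N) k ≤ mIdeal M k := by
  rw [← mIdeal_transpose (M * N), Matrix.transpose_mul, ← mIdeal_transpose M]
  exact mIdeal_mul_le_right Nᵀ Mᵀ k

theorem mIdeal_peel_le {ι κ : Type*} (M : Matrix ι κ R) (k : ℕ) :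
    mIdeal (Matrix.fromBlocks M 0 0 (1 : Matrix (Fin 1) (Fin 1) R)) k ≤ mIdeal M (k - 1) := by
  set D := Matrix.fromBlocks M 0 0 (1 : Matrix (Fin 1) (Fin 1) R) with hD
  rw [mIdeal, Ideal.span_le]
  rintro x ⟨r, c, rfl⟩
  match k with
  | 0 => simp [mIdeal_zero]
  | (j+1) =>
    simp only [Nat.add_sub_cancel]
    by_cases hr : ∃ a z, r a = Sum.inr z
    · obtain ⟨a, z, ha⟩ := hr
      by_cases hr2 : ∃ a', a' ≠ a ∧ ∃ z', r a' = Sum.inr z'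
      · -- two equal rows
        obtain ⟨a', ha'ne, z', ha'⟩ := hr2
        have : (D.submatrix r c).det = 0 := by
          refine Matrix.det_zero_of_row_eq ha'ne.symm ?_
          funext b
          simp only [Matrix.submatrix_apply, ha, ha', Subsingleton.elim z z']
        simp [this]
      · push_neg at hr2
        by_cases hc : ∃ b w, c b = Sum.inr w
        · obtain ⟨b, w, hb⟩ := hc
          by_cases hc2 : ∃ b', b' ≠ b ∧ ∃ w', c b' = Sum.inr w'
          · -- two equal columns
            obtain ⟨b', hb'ne, w', hb'⟩ := hc2
            have : (D.submatrix r c).det = 0 := by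
              refine Matrix.det_zero_of_column_eq hb'ne.symm ?_
              intro i
              simp only [Matrix.submatrix_apply, hb, hb', Subsingleton.elim w w']
            simp [this]
          · push_neg at hc2
            -- expand along row a
            rw [Matrix.det_succ_row _ a]
            refine Ideal.sum_mem _ fun b' _ => ?_
            by_cases hb'b : b' = b
            · subst hb'b
              have h1 : D.submatrix r c a b' = 1 := by
                simp [hD, Matrix.submatrix_apply, ha, hb, Matrix.one_apply,
                  Subsingleton.elim z w]
              rw [h1, mul_one]
              refine Ideal.mul_mem_left _ _ ?_
              rw [Matrix.submatrix_submatrix]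
              -- the minor avoids the extra row and column
              have hrow' : ∀ x, ∃ y, r (a.succAbove x) = Sum.inl y := by
                intro x
                rcases h : r (a.succAbove x) with y | z'
                · exact ⟨y, rfl⟩
                · exact absurd h (hr2 _ (Fin.succAbove_ne a x) z')
              have hcol' : ∀ x, ∃ y, c (b'.succAbove x) = Sum.inl y := by
                intro x
                rcases h : c (b'.succAbove x) with y | w'
                · exact ⟨y, rfl⟩
                · exact absurd h (hc2 _ (Fin.succAbove_ne b' x) w')
              obtain ⟨r₀, hr₀⟩ : ∃ r₀ : Fin j → ι, ∀ x, r (a.succAbove x) = Sum.inl (r₀ x) :=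
                ⟨fun x => (hrow' x).choose, fun x => (hrow' x).choose_spec⟩
              obtain ⟨c₀, hc₀⟩ : ∃ c₀ : Fin j → κ, ∀ x, c (b'.succAbove x) = Sum.inl (c₀ x) :=
                ⟨fun x => (hcol' x).choose, fun x => (hcol' x).choose_spec⟩
              have heq : D.submatrix (r ∘ a.succAbove) (c ∘ b'.succAbove)
                  = M.submatrix r₀ c₀ := by
                ext i' j'
                simp only [Matrix.submatrix_apply, Function.comp_apply, hr₀ i', hc₀ j', hD,
                  Matrix.fromBlocks_apply₁₁]
              rw [heq]
              exact det_mem_mIdeal M _ _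
            · have : D.submatrix r c a b' = 0 := by
                rcases h : c b' with y | w'
                · simp [hD, Matrix.submatrix_apply, ha, h]
                · exact absurd h (hc2 _ hb'b w')
              rw [this]
              simp
        · -- row a is zero
          push_neg at hc
          have : (D.submatrix r c).det = 0 := by
            refine Matrix.det_eq_zero_of_row_eq_zero a fun b => ?_
            rcases h : c b with y | w
            · simp [hD, Matrix.submatrix_apply, ha, h]
            · exact absurd h (hc b w)
          simp [this]
    · -- no extra row used
      push_neg at hr
      have hrow' : ∀ x, ∃ y, r x = Sum.inl y := by
        intro x
        rcases h : r x with y | z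
        · exact ⟨y, rfl⟩
        · exact absurd h (hr x z)
      by_cases hc : ∃ b w, c b = Sum.inr w
      · -- a zero column
        obtain ⟨b, w, hb⟩ := hc
        obtain ⟨r₀, hr₀⟩ : ∃ r₀ : Fin (j+1) → ι, ∀ x, r x = Sum.inl (r₀ x) :=
          ⟨fun x => (hrow' x).choose, fun x => (hrow' x).choose_spec⟩
        have : (D.submatrix r c).det = 0 := by
          refine Matrix.det_eq_zero_of_column_eq_zero b fun i => ?_
          simp only [Matrix.submatrix_apply, hr₀ i, hb, hD,
            Matrix.fromBlocks_apply₁₂, Matrix.zero_apply]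
        simp [this]
      · push_neg at hc
        have hcol' : ∀ x, ∃ y, c x = Sum.inl y := by
          intro x
          rcases h : c x with y | w
          · exact ⟨y, rfl⟩
          · exact absurd h (hc x w)
        obtain ⟨r₀, hr₀⟩ : ∃ r₀ : Fin (j+1) → ι, ∀ x, r x = Sum.inl (r₀ x) :=
          ⟨fun x => (hrow' x).choose, fun x => (hrow' x).choose_spec⟩
        obtain ⟨c₀, hc₀⟩ : ∃ c₀ : Fin (j+1) → κ, ∀ x, c x = Sum.inl (c₀ x) :=
          ⟨fun x => (hcol' x).choose, fun x => (hcol' x).choose_spec⟩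
        have heq : D.submatrix r c = M.submatrix r₀ c₀ := by
          ext i' j'
          simp only [Matrix.submatrix_apply, hr₀ i', hc₀ j', hD,
            Matrix.fromBlocks_apply₁₁]
        rw [heq]
        exact mIdeal_succ_le M j (det_mem_mIdeal M _ _)

theorem mIdeal_le_peel {ι κ : Type*} (M : Matrix ι κ R) (k : ℕ) :
    mIdeal M (k - 1) ≤ mIdeal (Matrix.fromBlocks M 0 0 (1 : Matrix (Fin 1) (Fin 1) R)) k := by
  set D := Matrix.fromBlocks M 0 0 (1 : Matrix (Fin 1) (Fin 1) R) with hD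
  match k with
  | 0 => simp [mIdeal_zero]
  | (j+1) =>
    simp only [Nat.add_sub_cancel]
    rw [mIdeal, Ideal.span_le]
    rintro x ⟨r, c, rfl⟩
    have heq : D.submatrix (Sum.map r (id : Fin 1 → Fin 1)) (Sum.map c id)
        = Matrix.fromBlocks (M.submatrix r c) 0 0 (1 : Matrix (Fin 1) (Fin 1) R) := by
      ext i' j'
      rcases i' with i' | i' <;> rcases j' with j' | j' <;>
        simp [hD, Matrix.submatrix_apply]
    have hdet : (M.submatrix r c).det
        = (D.submatrix (Sum.map r (id : Fin 1 → Fin 1) ∘ (finSumFinEquiv (m := j) (n := 1)).symm)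
            (Sum.map c id ∘ (finSumFinEquiv (m := j) (n := 1)).symm)).det := by
      rw [← Matrix.submatrix_submatrix]
      rw [Matrix.det_submatrix_equiv_self]
      rw [heq, Matrix.det_fromBlocks_zero₂₁]
      simp
    rw [hdet]
    exact det_mem_mIdeal D _ _

theorem mIdeal_peel {ι κ : Type*} (M : Matrix ι κ R) (k : ℕ) :
    mIdeal (Matrix.fromBlocks M 0 0 (1 : Matrix (Fin 1) (Fin 1) R)) k = mIdeal M (k - 1) :=
  le_antisymm (mIdeal_peel_le M k) (mIdeal_le_peel M k)

theorem mIdeal_peel_many {ι κ : Type*} (M : Matrix ι κ R) (s k : ℕ) :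
    mIdeal (Matrix.fromBlocks M 0 0 (1 : Matrix (Fin s) (Fin s) R)) k = mIdeal M (k - s) := by
  induction s generalizing k with
  | zero =>
    have heq : M.submatrix (Equiv.sumEmpty ι (Fin 0)) (Equiv.sumEmpty κ (Fin 0))
        = Matrix.fromBlocks M 0 0 (1 : Matrix (Fin 0) (Fin 0) R) := by
      ext i j
      rcases i with i | i
      · rcases j with j | j
        · simp
        · exact j.elim0
      · exact i.elim0
    rw [← heq, mIdeal_reindex]
    simp
  | succ s ih =>
    have heq : (Matrix.fromBlocks M 0 0 (1 : Matrix (Fin (s+1)) (Fin (s+1)) R)).submatrix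
          ((Equiv.sumAssoc ι (Fin s) (Fin 1)).trans ((Equiv.refl ι).sumCongr finSumFinEquiv))
          ((Equiv.sumAssoc κ (Fin s) (Fin 1)).trans ((Equiv.refl κ).sumCongr finSumFinEquiv))
        = Matrix.fromBlocks (Matrix.fromBlocks M 0 0 (1 : Matrix (Fin s) (Fin s) R)) 0 0
            (1 : Matrix (Fin 1) (Fin 1) R) := by
      ext i j
      rcases i with (i | i) | i <;> rcases j with (j | j) | j <;>
        simp only [Matrix.submatrix_apply, Equiv.trans_apply, Equiv.sumAssoc_apply_inl_inl,
          Equiv.sumAssoc_apply_inl_inr, Equiv.sumAssoc_apply_inr, Equiv.sumCongr_apply,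
          Sum.map_inl, Sum.map_inr, Equiv.refl_apply, finSumFinEquiv_apply_left,
          finSumFinEquiv_apply_right, Matrix.fromBlocks_apply₁₁, Matrix.fromBlocks_apply₁₂,
          Matrix.fromBlocks_apply₂₁, Matrix.fromBlocks_apply₂₂, Matrix.zero_apply,
          Matrix.one_apply, Fin.ext_iff, Fin.coe_castAdd, Fin.coe_natAdd] <;>
        first
          | rfl
          | (rw [if_neg (by omega)])
          | (by_cases hij : (i : ℕ) = (j : ℕ) <;> simp [hij])
    rw [← mIdeal_reindex _
        ((Equiv.sumAssoc ι (Fin s) (Fin 1)).trans ((Equiv.refl ι).sumCongr finSumFinEquiv))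
        ((Equiv.sumAssoc κ (Fin s) (Fin 1)).trans ((Equiv.refl κ).sumCongr finSumFinEquiv)),
      heq, mIdeal_peel, ih]
    congr 1
    omega

theorem mIdeal_le_of_range_le {ι κ₁ κ₂ : Type*} [Fintype ι] [Fintype κ₁] [Fintype κ₂]
    (M₁ : Matrix ι κ₁ R) (M₂ : Matrix ι κ₂ R)
    (h : LinearMap.range M₁.mulVecLin ≤ LinearMap.range M₂.mulVecLin) (k : ℕ) :
    mIdeal M₁ k ≤ mIdeal M₂ k := by
  classical
  have hcol : ∀ j : κ₁, ∃ cj : κ₂ → R, M₂ *ᵥ cj = fun i => M₁ i j := by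
    intro j
    have : (fun i => M₁ i j) ∈ LinearMap.range M₂.mulVecLin := by
      refine h ⟨Pi.single j 1, ?_⟩
      rw [Matrix.mulVecLin_apply, Matrix.mulVec_single]
      simp
      rfl
    obtain ⟨cj, hcj⟩ := this
    exact ⟨cj, hcj⟩
  choose C hC using hcol
  have hM : M₂ * (Matrix.of fun x j => C j x) = M₁ := by
    ext i j
    have := congrFun (hC j) i
    simpa [Matrix.mul_apply, Matrix.mulVec, dotProduct] using this
  rw [← hM]
  exact mIdeal_mul_le_left _ _ k

theorem mIdeal_eq_of_range_eq {ι κ₁ κ₂ : Type*} [Fintype ι] [Fintype κ₁] [Fintype κ₂]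
    (M₁ : Matrix ι κ₁ R) (M₂ : Matrix ι κ₂ R)
    (h : LinearMap.range M₁.mulVecLin = LinearMap.range M₂.mulVecLin) (k : ℕ) :
    mIdeal M₁ k = mIdeal M₂ k :=
  le_antisymm (mIdeal_le_of_range_le M₁ M₂ h.le k) (mIdeal_le_of_range_le M₂ M₁ h.ge k)

section pres
variable {A : Type*} [AddCommGroup A] [Module R A]

/-- The big matrix `[[M, -P],[0,1]]` presents `A` with respect to the combined
generating map. -/
theorem bigKer {n m n' : ℕ} (M : Matrix (Fin n) (Fin m) R) (P : Matrix (Fin n) (Fin n') R)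
    (g : (Fin n → R) →ₗ[R] A) (g' : (Fin n' → R) →ₗ[R] A)
    (hker : LinearMap.ker g = LinearMap.range M.mulVecLin)
    (hP : ∀ v, g (P *ᵥ v) = g' v) :
    LinearMap.ker (g ∘ₗ LinearMap.funLeft R R Sum.inl + g' ∘ₗ LinearMap.funLeft R R Sum.inr)
      = LinearMap.range (Matrix.fromBlocks M (-P) 0
          (1 : Matrix (Fin n') (Fin n') R)).mulVecLin := by
  ext x
  simp only [LinearMap.mem_ker, LinearMap.mem_range, LinearMap.add_apply, LinearMap.comp_apply,
    LinearMap.funLeft_apply]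
  constructor
  · intro hx
    have h1 : g ((x ∘ Sum.inl) + P *ᵥ (x ∘ Sum.inr)) = 0 := by
      rw [map_add, hP]
      convert hx using 2 <;> rfl
    have h2 : ((x ∘ Sum.inl) + P *ᵥ (x ∘ Sum.inr)) ∈ LinearMap.range M.mulVecLin := by
      rw [← hker]; exact h1
    obtain ⟨v, hv⟩ := h2
    refine ⟨Sum.elim v (x ∘ Sum.inr), ?_⟩
    rw [Matrix.mulVecLin_apply, Matrix.fromBlocks_mulVec]
    have hl : Sum.elim v (x ∘ Sum.inr) ∘ Sum.inl = v := rfl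
    have hr : Sum.elim v (x ∘ Sum.inr) ∘ Sum.inr = x ∘ Sum.inr := rfl
    rw [hl, hr]
    funext i
    rcases i with i | i
    · have := congrFun hv i
      rw [Matrix.mulVecLin_apply] at this
      simp only [Sum.elim_inl, Pi.add_apply, Matrix.neg_mulVec, Pi.neg_apply]
      rw [this]
      simp only [Pi.add_apply, Function.comp_apply]
      ring
    · simp
  · rintro ⟨w, rfl⟩
    rw [Matrix.mulVecLin_apply, Matrix.fromBlocks_mulVec]
    show g (M *ᵥ (w ∘ Sum.inl) + (-P) *ᵥ (w ∘ Sum.inr))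
        + g' ((0 : Matrix (Fin n') (Fin m) R) *ᵥ (w ∘ Sum.inl)
          + (1 : Matrix (Fin n') (Fin n') R) *ᵥ (w ∘ Sum.inr)) = 0
    have hg0 : g (M *ᵥ (w ∘ Sum.inl)) = 0 := by
      have : M *ᵥ (w ∘ Sum.inl) ∈ LinearMap.range M.mulVecLin := ⟨w ∘ Sum.inl, rfl⟩
      rw [← hker] at this
      exact this
    rw [map_add, hg0, zero_add, Matrix.neg_mulVec, map_neg, hP]
    simp [Matrix.zero_mulVec, Matrix.one_mulVec]

theorem mIdeal_big {n m n' : ℕ} (M : Matrix (Fin n) (Fin m) R) (P : Matrix (Fin n) (Fin n') R)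
    (k : ℕ) :
    mIdeal (Matrix.fromBlocks M (-P) 0 (1 : Matrix (Fin n') (Fin n') R)) k
      = mIdeal M (k - n') := by
  rw [← mIdeal_peel_many M n' k]
  have h1 : Matrix.fromBlocks M (-P) 0 (1 : Matrix (Fin n') (Fin n') R)
      = Matrix.fromBlocks (1 : Matrix (Fin n) (Fin n) R) (-P) 0 (1 : Matrix (Fin n') (Fin n') R)
        * Matrix.fromBlocks M 0 0 (1 : Matrix (Fin n') (Fin n') R) := by
    rw [Matrix.fromBlocks_multiply]; simp
  have h2 : Matrix.fromBlocks M 0 0 (1 : Matrix (Fin n') (Fin n') R)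
      = Matrix.fromBlocks (1 : Matrix (Fin n) (Fin n) R) P 0 (1 : Matrix (Fin n') (Fin n') R)
        * Matrix.fromBlocks M (-P) 0 (1 : Matrix (Fin n') (Fin n') R) := by
    rw [Matrix.fromBlocks_multiply]; simp
  refine le_antisymm ?_ ?_
  · rw [h1]; exact mIdeal_mul_le_right _ _ k
  · rw [h2]; exact mIdeal_mul_le_right _ _ k

/-- One-sided comparison through the combined presentation. -/
theorem mIdeal_pres {n m n' m' : ℕ} (M : Matrix (Fin n) (Fin m) R)
    (M' : Matrix (Fin n') (Fin m') R)
    (g : (Fin n → R) →ₗ[R] A) (g' : (Fin n' → R) →ₗ[R] A)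
    (hg : Function.Surjective g)
    (hker : LinearMap.ker g = LinearMap.range M.mulVecLin)
    (hg' : Function.Surjective g')
    (hker' : LinearMap.ker g' = LinearMap.range M'.mulVecLin)
    (i : ℕ) : mIdeal M (n - i) = mIdeal M' (n' - i) := by
  classical
  -- lift g' through g and vice versa
  have hliftP : ∃ P : Matrix (Fin n) (Fin n') R, ∀ v, g (P *ᵥ v) = g' v := by
    have hcol : ∀ j : Fin n', ∃ p : Fin n → R, g p = g' (Pi.single j 1) := fun j =>
      hg (g' (Pi.single j 1))
    choose p hp using hcol
    refine ⟨Matrix.of fun i j => p j i, ?_⟩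
    have : g ∘ₗ (Matrix.of fun i j => p j i : Matrix (Fin n) (Fin n') R).mulVecLin = g' := by
      refine Module.Basis.ext (Pi.basisFun R (Fin n')) fun j => ?_
      rw [Pi.basisFun_apply]
      rw [LinearMap.comp_apply, Matrix.mulVecLin_apply, Matrix.mulVec_single]
      simp
      exact hp j
    intro v
    have := congrArg (fun f => f v) (congrArg DFunLike.coe this)
    simpa using this
  have hliftP' : ∃ P' : Matrix (Fin n') (Fin n) R, ∀ v, g' (P' *ᵥ v) = g v := by
    have hcol : ∀ j : Fin n, ∃ p : Fin n' → R, g' p = g (Pi.single j 1) := fun j =>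
      hg' (g (Pi.single j 1))
    choose p hp using hcol
    refine ⟨Matrix.of fun i j => p j i, ?_⟩
    have : g' ∘ₗ (Matrix.of fun i j => p j i : Matrix (Fin n') (Fin n) R).mulVecLin = g := by
      refine Module.Basis.ext (Pi.basisFun R (Fin n)) fun j => ?_
      rw [Pi.basisFun_apply]
      rw [LinearMap.comp_apply, Matrix.mulVecLin_apply, Matrix.mulVec_single]
      simp
      exact hp j
    intro v
    have := congrArg (fun f => f v) (congrArg DFunLike.coe this)
    simpa using this
  obtain ⟨P, hP⟩ := hliftP
  obtain ⟨P', hP'⟩ := hliftP'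
  set N : Matrix (Fin n ⊕ Fin n') (Fin m ⊕ Fin n') R :=
    Matrix.fromBlocks M (-P) 0 1 with hN
  set N' : Matrix (Fin n' ⊕ Fin n) (Fin m' ⊕ Fin n) R :=
    Matrix.fromBlocks M' (-P') 0 1 with hN'
  have hbig : LinearMap.ker
      (g ∘ₗ LinearMap.funLeft R R Sum.inl + g' ∘ₗ LinearMap.funLeft R R Sum.inr)
      = LinearMap.range N.mulVecLin := bigKer M P g g' hker hP
  have hbig' : LinearMap.ker
      (g' ∘ₗ LinearMap.funLeft R R Sum.inl + g ∘ₗ LinearMap.funLeft R R Sum.inr)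
      = LinearMap.range N'.mulVecLin := bigKer M' P' g' g hker' hP'
  -- the swapped version of N'
  set Nsw : Matrix (Fin n ⊕ Fin n') (Fin m' ⊕ Fin n) R :=
    N'.submatrix (Equiv.sumComm (Fin n) (Fin n')) (_root_.id) with hNsw
  have hswap : LinearMap.range Nsw.mulVecLin = LinearMap.range N.mulVecLin := by
    rw [← hbig]
    ext x
    simp only [LinearMap.mem_range, LinearMap.mem_ker, LinearMap.add_apply,
      LinearMap.comp_apply]
    constructor
    · rintro ⟨w, rfl⟩
      have hx : Nsw.mulVecLin w = (N'.mulVecLin w) ∘ (Equiv.sumComm (Fin n) (Fin n')) := by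
        funext i'
        simp [hNsw, Matrix.mulVecLin_apply, Matrix.mulVec, Matrix.submatrix_apply]
      rw [hx]
      have hy : N'.mulVecLin w ∈ LinearMap.ker
          (g' ∘ₗ LinearMap.funLeft R R Sum.inl + g ∘ₗ LinearMap.funLeft R R Sum.inr) := by
        rw [hbig']; exact ⟨w, rfl⟩
      simp only [LinearMap.mem_ker, LinearMap.add_apply, LinearMap.comp_apply] at hy
      show g ((N'.mulVecLin w ∘ ⇑(Equiv.sumComm (Fin n) (Fin n'))) ∘ Sum.inl)
          + g' ((N'.mulVecLin w ∘ ⇑(Equiv.sumComm (Fin n) (Fin n'))) ∘ Sum.inr) = 0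
      have e1 : (N'.mulVecLin w ∘ ⇑(Equiv.sumComm (Fin n) (Fin n'))) ∘ Sum.inl
          = N'.mulVecLin w ∘ Sum.inr := rfl
      have e2 : (N'.mulVecLin w ∘ ⇑(Equiv.sumComm (Fin n) (Fin n'))) ∘ Sum.inr
          = N'.mulVecLin w ∘ Sum.inl := rfl
      rw [e1, e2]
      rw [add_comm]
      exact hy
    · intro hx
      have hy : x ∘ ⇑(Equiv.sumComm (Fin n') (Fin n)) ∈ LinearMap.ker
          (g' ∘ₗ LinearMap.funLeft R R Sum.inl + g ∘ₗ LinearMap.funLeft R R Sum.inr) := by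
        simp only [LinearMap.mem_ker, LinearMap.add_apply, LinearMap.comp_apply]
        show g' ((x ∘ ⇑(Equiv.sumComm (Fin n') (Fin n))) ∘ Sum.inl)
            + g ((x ∘ ⇑(Equiv.sumComm (Fin n') (Fin n))) ∘ Sum.inr) = 0
        have e1 : (x ∘ ⇑(Equiv.sumComm (Fin n') (Fin n))) ∘ Sum.inl = x ∘ Sum.inr := rfl
        have e2 : (x ∘ ⇑(Equiv.sumComm (Fin n') (Fin n))) ∘ Sum.inr = x ∘ Sum.inl := rfl
        rw [e1, e2, add_comm]
        exact hx
      rw [hbig'] at hy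
      obtain ⟨w, hw⟩ := hy
      refine ⟨w, ?_⟩
      have hx2 : Nsw.mulVecLin w = (N'.mulVecLin w) ∘ (Equiv.sumComm (Fin n) (Fin n')) := by
        funext i'
        simp [hNsw, Matrix.mulVecLin_apply, Matrix.mulVec, Matrix.submatrix_apply]
      rw [hx2, hw]
      funext i'
      rcases i' with i' | i' <;> rfl
  have key : mIdeal N (n + n' - i) = mIdeal Nsw (n + n' - i) :=
    mIdeal_eq_of_range_eq N Nsw hswap.symm (n + n' - i)
  have kNsw : mIdeal Nsw (n + n' - i) = mIdeal N' (n + n' - i) := by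
    rw [hNsw, ← mIdeal_reindex N' (Equiv.sumComm (Fin n) (Fin n')) (Equiv.refl _)]
    rfl
  have h1 : mIdeal N (n + n' - i) = mIdeal M (n - i) := by
    rw [hN, mIdeal_big]
    congr 1
    omega
  have h2 : mIdeal N' (n + n' - i) = mIdeal M' (n' - i) := by
    rw [hN', mIdeal_big]
    congr 1
    omega
  rw [← h1, key, kNsw, h2]

end pres
end helpers

/-- The ideal of `R` generated by the `k × k` minors of the matrix `M`.
(If `k = 0` this is all of `R`; if `k` exceeds the number of columns it is `0`.) -/
def minorsIdeal {R : Type*} [CommRing R] {n m : ℕ} (M : Matrix (Fin n) (Fin m) R)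
    (k : ℕ) : Ideal R :=
  Ideal.span { x | ∃ (r : Fin k → Fin n) (c : Fin k → Fin m), x = (M.submatrix r c).det }

/-- The `i`-th elementary (Fitting) ideal of a module presented by the `n × m` matrix `M`:
the ideal generated by the `(n - i) × (n - i)` minors of `M`. -/
def elemIdeal {R : Type*} [CommRing R] {n m : ℕ} (M : Matrix (Fin n) (Fin m) R)
    (i : ℕ) : Ideal R :=
  minorsIdeal M (n - i)

theorem fitting_ideal_independent_of_presentation
    {R : Type*} [CommRing R] {A : Type*} [AddCommGroup A] [Module R A]
    {n m n' m' : ℕ} (M : Matrix (Fin n) (Fin m) R) (M' : Matrix (Fin n') (Fin m') R)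
    (g : (Fin n → R) →ₗ[R] A) (g' : (Fin n' → R) →ₗ[R] A)
    (hg : Function.Surjective g)
    (hker : LinearMap.ker g = LinearMap.range M.mulVecLin)
    (hg' : Function.Surjective g')
    (hker' : LinearMap.ker g' = LinearMap.range M'.mulVecLin)
    (i : ℕ) :
    elemIdeal M i = elemIdeal M' i := by
  have h : minorsIdeal M (n - i) = mIdeal M (n - i) := rfl
  have h' : minorsIdeal M' (n' - i) = mIdeal M' (n' - i) := rfl
  rw [elemIdeal, elemIdeal, h, h']
  exact mIdeal_pres M M' g g' hg hker hg' hker' i
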